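/- arXiv:1505.00967 — 4 statements merged into one kernel-verified Lean document; each statement's English description precedes it below -/
import Mathlib

section
/- Let A be a fermionic Novikov algebra with an invariant non-degenerate symmetric bilinear form ⟨·,·⟩. Then for any x ∈ A, the subspace Im(R_x) is totally isotropic: ⟨R_x(y), R_x(z)⟩ = 0 for all y, z ∈ A. -/
/-- In a fermionic Novikov algebra with an invariant non-degenerate symmetric bilinear form,
the image of any right multiplication operator is totally isotropic. -/
theorem stmt_3 {A : Type*} [AddCommGroup A] [Module ℝ A] [FiniteDimensional ℝ A]
    (mul : A →ₗ[ℝ] A →ₗ[ℝ] A)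
    (hls : ∀ x y z : A, mul (mul x y) z - mul x (mul y z)
      = mul (mul y x) z - mul y (mul x z))
    (hferm : ∀ x y z : A, mul (mul x y) z = - mul (mul x z) y)
    (B : A →ₗ[ℝ] A →ₗ[ℝ] ℝ)
    (hsymm : ∀ u v : A, B u v = B v u)
    (hnondeg : ∀ v : A, (∀ w : A, B v w = 0) → v = 0)
    (hinv : ∀ x y z : A, B (mul y x) z = B y (mul z x))
    (x y z : A) :
    B (mul y x) (mul z x) = 0 := by
  have h0 : mul (mul z x) x = 0 := by
    have h := hferm z x x
    have h2 : (2 : ℝ) • mul (mul z x) x = 0 := by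
      rw [two_smul]
      nth_rewrite 2 [h]
      abel
    simpa using (smul_eq_zero.mp h2).resolve_left (by norm_num)
  rw [hinv, h0]
  simp
end

section
/- Let A be a real fermionic Novikov algebra of dimension n with an invariant non-degenerate symmetric bilinear form of signature (n-p, p) (p minus signs). Then for every x ∈ A, dim Im(R_x) ≤ p. -/
/-- In an `n`-dimensional real fermionic Novikov algebra with an invariant non-degenerate
symmetric bilinear form of signature `(n-p, p)` (`p` minus signs), `dim Im(R_x) ≤ p`. -/
theorem stmt_4 {A : Type*} [AddCommGroup A] [Module ℝ A] [FiniteDimensional ℝ A]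
    {n p : ℕ} (hpn : p ≤ n)
    (mul : A →ₗ[ℝ] A →ₗ[ℝ] A)
    (hls : ∀ x y z : A, mul (mul x y) z - mul x (mul y z)
      = mul (mul y x) z - mul y (mul x z))
    (hferm : ∀ x y z : A, mul (mul x y) z = - mul (mul x z) y)
    (B : A →ₗ[ℝ] A →ₗ[ℝ] ℝ)
    (hsymm : ∀ u v : A, B u v = B v u)
    (hinv : ∀ x y z : A, B (mul y x) z = B y (mul z x))
    (b : Module.Basis (Fin n) ℝ A)
    (hdiag : ∀ i : Fin n, B (b i) (b i) = if (i : ℕ) < p then -1 else 1)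
    (horth : ∀ i j : Fin n, i ≠ j → B (b i) (b j) = 0)
    (x : A) :
    Module.finrank ℝ (LinearMap.range (mul.flip x)) ≤ p := by
  -- R_x squared is zero
  have hR2 : ∀ y : A, mul (mul y x) x = 0 := by
    intro y
    have h := hferm y x x
    have h2 : (2:ℝ) • mul (mul y x) x = 0 := by
      rw [two_smul]
      nth_rewrite 2 [h]
      simp
    simpa using (smul_eq_zero.mp h2).resolve_left (by norm_num)
  -- elements of the range are isotropic
  have hiso : ∀ a : A, B (mul a x) (mul a x) = 0 := by
    intro a
    rw [hinv x a (mul a x), hR2 a, map_zero]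
  -- diagonal formula for B w w
  have hBw : ∀ w : A, B w w
      = ∑ i : Fin n, (b.repr w i)^2 * (if (i : ℕ) < p then -1 else 1) := by
    intro w
    conv_lhs => rw [← b.sum_repr w]
    rw [map_sum]
    simp only [map_smul, LinearMap.smul_apply, LinearMap.sum_apply, map_sum, smul_eq_mul,
      Finset.mul_sum]
    refine Finset.sum_congr rfl fun i _ => ?_
    rw [Finset.sum_eq_single i]
    · rw [hdiag i]; ring
    · intro j _ hj
      rw [horth j i hj]; ring
    · intro h; exact absurd (Finset.mem_univ i) h
  -- projection onto first p coordinates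
  set g : A →ₗ[ℝ] (Fin p → ℝ) :=
    LinearMap.pi (fun i : Fin p => b.coord ⟨i, lt_of_lt_of_le i.2 hpn⟩) with hg
  have hinj : Function.Injective (g.domRestrict (LinearMap.range (mul.flip x))) := by
    rw [← LinearMap.ker_eq_bot, LinearMap.ker_eq_bot']
    rintro ⟨w, hw⟩ hgw
    obtain ⟨a, rfl⟩ := hw
    have hgw' : ∀ i : Fin p, b.repr (mul a x) ⟨i, lt_of_lt_of_le i.2 hpn⟩ = 0 := by
      intro i
      simpa [hg, Module.Basis.coord_apply] using congrFun hgw i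
    -- compute B w w
    have hbww := hBw (mul a x)
    rw [hiso a] at hbww
    have hzero : ∀ i : Fin n, b.repr (mul a x) i = 0 := by
      intro i
      by_cases hip : (i : ℕ) < p
      · exact hgw' ⟨i, hip⟩
      · -- all terms in the sum are nonneg; total is zero
        have hterm : ∀ j : Fin n,
            0 ≤ (b.repr (mul a x) j)^2 * (if (j : ℕ) < p then (-1 : ℝ) else 1) := by
          intro j
          by_cases hjp : (j : ℕ) < p
          · rw [hgw' ⟨j, hjp⟩]; simp
          · simp only [hjp, if_neg, if_false, mul_one]
            positivity
        have := (Finset.sum_eq_zero_iff_of_nonneg (fun j _ => hterm j)).mp hbww.symm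
          i (Finset.mem_univ i)
        simp only [hip, if_false, mul_one] at this
        exact pow_eq_zero_iff (n := 2) (by norm_num) |>.mp this
    have hrepr : b.repr (mul a x) = 0 := by
      ext i; simp [hzero i]
    exact Subtype.ext ((LinearEquiv.map_eq_zero_iff b.repr).mp hrepr)
  calc Module.finrank ℝ (LinearMap.range (mul.flip x))
      ≤ Module.finrank ℝ (Fin p → ℝ) := LinearMap.finrank_le_finrank_of_injective hinj
    _ = p := Module.finrank_fin_fun ℝ
end

section
/- Let A be a finite-dimensional real fermionic Novikov algebra with an invariant non-degenerate symmetric bilinear form. If the form is positive definite, then the product on A is identically zero: xy = 0 for all x, y ∈ A. -/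
/-- A finite-dimensional real fermionic Novikov algebra with an invariant positive definite
symmetric bilinear form has identically zero product. -/
theorem stmt_9 {A : Type*} [AddCommGroup A] [Module ℝ A] [FiniteDimensional ℝ A]
    (mul : A →ₗ[ℝ] A →ₗ[ℝ] A)
    (hls : ∀ x y z : A, mul (mul x y) z - mul x (mul y z)
      = mul (mul y x) z - mul y (mul x z))
    (hferm : ∀ x y z : A, mul (mul x y) z = - mul (mul x z) y)
    (B : A →ₗ[ℝ] A →ₗ[ℝ] ℝ)
    (hsymm : ∀ u v : A, B u v = B v u)
    (hpos : ∀ v : A, v ≠ 0 → 0 < B v v)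
    (hinv : ∀ x y z : A, B (mul y x) z = B y (mul z x)) :
    ∀ x y : A, mul x y = 0 := by
  intro x y
  -- (xy)y = 0 since (xy)y = -(xy)y
  have hsq : mul (mul x y) y = 0 := by
    have h := hferm x y y
    have h2 : mul (mul x y) y + mul (mul x y) y = 0 := by
      nth_rewrite 1 [h]; abel
    have h3 : (2 : ℝ) • mul (mul x y) y = 0 := by
      rw [two_smul]; exact h2
    rcases smul_eq_zero.mp h3 with h4 | h4
    · norm_num at h4
    · exact h4
  by_contra hne
  have hBB : B (mul x y) (mul x y) = 0 := by
    have := hinv y x (mul x y)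
    rw [this, hsq, map_zero]
  exact absurd hBB (ne_of_gt (hpos _ hne))
end

section
/- Let A be an n-dimensional real vector space (n ≥ 2) with basis e₁,…,eₙ, with product defined by e₁e₂ = e₂ and all other products of basis vectors zero. Then A is a fermionic Novikov algebra admitting an invariant non-degenerate symmetric bilinear form, namely the form with ⟨e₁,e₂⟩ = ⟨e₂,e₁⟩ = 1, ⟨eᵢ,eᵢ⟩ = 1 for i ≥ 3, and all other pairings zero. -/
/-- The `n`-dimensional real algebra (`n ≥ 2`) with `e₁e₂ = e₂` and all other products of basis
vectors zero is a fermionic Novikov algebra admitting an invariant non-degenerate symmetric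
bilinear form, namely `⟨e₁,e₂⟩ = ⟨e₂,e₁⟩ = 1`, `⟨eᵢ,eᵢ⟩ = 1` for `i ≥ 3`, other pairings zero. -/
theorem stmt_14 {n : ℕ} (hn : 2 ≤ n)
    (mul : (Fin n → ℝ) →ₗ[ℝ] (Fin n → ℝ) →ₗ[ℝ] (Fin n → ℝ))
    (hmul : ∀ x y : Fin n → ℝ,
      mul x y = (x ⟨0, by omega⟩ * y ⟨1, by omega⟩) • (Pi.single (⟨1, by omega⟩ : Fin n) (1 : ℝ) : Fin n → ℝ))
    (B : (Fin n → ℝ) → (Fin n → ℝ) → ℝ)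
    (hB : ∀ x y : Fin n → ℝ,
      B x y = x ⟨0, by omega⟩ * y ⟨1, by omega⟩ + x ⟨1, by omega⟩ * y ⟨0, by omega⟩
        + ∑ i : Fin n, (if 2 ≤ (i : ℕ) then x i * y i else 0)) :
    (∀ x y z : Fin n → ℝ, mul (mul x y) z - mul x (mul y z)
      = mul (mul y x) z - mul y (mul x z)) ∧
    (∀ x y z : Fin n → ℝ, mul (mul x y) z = - mul (mul x z) y) ∧
    (∀ u v : Fin n → ℝ, B u v = B v u) ∧
    (∀ v : Fin n → ℝ, (∀ w : Fin n → ℝ, B v w = 0) → v = 0) ∧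
    (∀ x y z : Fin n → ℝ, B (mul y x) z = B y (mul z x)) := by
  set i0 : Fin n := ⟨0, by omega⟩ with hi0
  set i1 : Fin n := ⟨1, by omega⟩ with hi1
  have hne : i0 ≠ i1 := by simp [hi0, hi1, Fin.ext_iff]
  have h0 : ∀ x y : Fin n → ℝ, mul x y i0 = 0 := by
    intro x y
    rw [hmul]
    simp [Pi.single_eq_of_ne hne]
  have h1 : ∀ x y : Fin n → ℝ, mul x y i1 = x i0 * y i1 := by
    intro x y
    rw [hmul]
    simp [Pi.single_eq_same]
  have hi : ∀ (x y : Fin n → ℝ) (i : Fin n), 2 ≤ (i : ℕ) → mul x y i = 0 := by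
    intro x y i h
    have : i ≠ i1 := by simp [hi1, Fin.ext_iff]; omega
    rw [hmul]
    simp [Pi.single_eq_of_ne this]
  refine ⟨?_, ?_, ?_, ?_, ?_⟩
  · intro x y z
    rw [hmul (mul x y) z, hmul x (mul y z), hmul (mul y x) z, hmul y (mul x z),
      h0 x y, h0 y x, h1 y z, h1 x z]
    ring_nf
  · intro x y z
    rw [hmul (mul x y) z, hmul (mul x z) y, h0 x y, h0 x z]
    simp
  · intro u v
    rw [hB, hB]
    ring_nf
    congr 1
    apply Finset.sum_congr rfl
    intro i _
    split <;> ring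
  · intro v hv
    funext i
    by_cases h2 : 2 ≤ (i : ℕ)
    · have := hv (Pi.single i 1)
      rw [hB] at this
      have hni0 : i ≠ i0 := by simp [hi0, Fin.ext_iff]; omega
      have hni1 : i ≠ i1 := by simp [hi1, Fin.ext_iff]; omega
      rw [Pi.single_eq_of_ne' hni1, Pi.single_eq_of_ne' hni0] at this
      simp only [mul_zero, zero_add, mul_zero, add_zero] at this
      rw [Finset.sum_eq_single i] at this
      · simpa [h2] using this
      · intro j _ hj
        simp [Pi.single_eq_of_ne hj]
      · simp
    · interval_cases h : (i : ℕ)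
      · have := hv (Pi.single i1 1)
        rw [hB] at this
        have hii0 : i = i0 := by simp [hi0, Fin.ext_iff, h]
        rw [Pi.single_eq_same, Pi.single_eq_of_ne hne] at this
        have hsum : ∀ j : Fin n, (if 2 ≤ (j : ℕ) then v j * (Pi.single i1 (1:ℝ) : Fin n → ℝ) j else 0) = 0 := by
          intro j
          by_cases hj : 2 ≤ (j : ℕ)
          · have : j ≠ i1 := by simp [hi1, Fin.ext_iff]; omega
            simp [hj, Pi.single_eq_of_ne this]
          · simp [hj]
        rw [Finset.sum_congr rfl (fun j _ => hsum j)] at this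
        simp only [Finset.sum_const_zero, mul_one, mul_zero, add_zero] at this
        simpa [hii0] using this
      · have := hv (Pi.single i0 1)
        rw [hB] at this
        have hii1 : i = i1 := by simp [hi1, Fin.ext_iff, h]
        rw [Pi.single_eq_same, Pi.single_eq_of_ne hne.symm] at this
        have hsum : ∀ j : Fin n, (if 2 ≤ (j : ℕ) then v j * (Pi.single i0 (1:ℝ) : Fin n → ℝ) j else 0) = 0 := by
          intro j
          by_cases hj : 2 ≤ (j : ℕ)
          · have : j ≠ i0 := by simp [hi0, Fin.ext_iff]; omega
            simp [hj, Pi.single_eq_of_ne this]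
          · simp [hj]
        rw [Finset.sum_congr rfl (fun j _ => hsum j)] at this
        simp only [Finset.sum_const_zero, mul_zero, mul_one, zero_add, add_zero] at this
        simpa [hii1] using this
  · intro x y z
    rw [hB, hB, h0 y x, h1 y x, h0 z x, h1 z x]
    have hs1 : ∀ j : Fin n, (if 2 ≤ (j : ℕ) then mul y x j * z j else 0) = 0 := by
      intro j
      by_cases hj : 2 ≤ (j : ℕ)
      · simp [hj, hi y x j hj]
      · simp [hj]
    have hs2 : ∀ j : Fin n, (if 2 ≤ (j : ℕ) then y j * mul z x j else 0) = 0 := by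
      intro j
      by_cases hj : 2 ≤ (j : ℕ)
      · simp [hj, hi z x j hj]
      · simp [hj]
    rw [Finset.sum_congr rfl (fun j _ => hs1 j), Finset.sum_congr rfl (fun j _ => hs2 j)]
    simp
    ring
end
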